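/- Let f : R^d → R be differentiable, L-smooth, μ-quasi-convex w.r.t. x⋆ (μ ≥ 0, L ≥ μ). Let x, x̃ ∈ R^d and let g = ∇f(x) + ξ where ξ is a zero-mean random vector with E‖ξ‖² ≤ M‖∇f(x)‖² + σ². Define x̃⁺ = x̃ − γ g with 0 < γ ≤ 1/(4L(1+M)). Then E‖x̃⁺ − x⋆‖² ≤ (1 − μγ/2)‖x̃ − x⋆‖² − (γ/2)(f(x) − f(x⋆)) + γ²σ² + 3Lγ‖x − x̃‖². -/

import Mathlib

open MeasureTheory
open scoped RealInnerProductSpace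

theorem descent_aux {d : ℕ} (f : EuclideanSpace ℝ (Fin d) → ℝ)
    (g : EuclideanSpace ℝ (Fin d) → EuclideanSpace ℝ (Fin d)) (L : ℝ)
    (hgrad : ∀ y, HasGradientAt f (g y) y)
    (hlip : ∀ y z, ‖g y - g z‖ ≤ L * ‖y - z‖)
    (z y : EuclideanSpace ℝ (Fin d)) :
    f y ≤ f z + ⟪g z, y - z⟫ + L / 2 * ‖y - z‖ ^ 2 := by
  set v := y - z with hv
  set φ : ℝ → ℝ := fun t => f (z + t • v) - t * ⟪g z, v⟫ - L / 2 * t ^ 2 * ‖v‖ ^ 2 with hφ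
  have hder : ∀ t : ℝ, HasDerivAt φ (⟪g (z + t • v), v⟫ - ⟪g z, v⟫ - L * t * ‖v‖ ^ 2) t := by
    intro t
    have hline : HasDerivAt (fun t : ℝ => z + t • v) v t := by
      simpa using ((hasDerivAt_id t).smul_const v).const_add z
    have h1 : HasDerivAt (fun t : ℝ => f (z + t • v)) ⟪g (z + t • v), v⟫ t := by
      have := (hgrad (z + t • v)).hasFDerivAt.comp_hasDerivAt t hline
      simp at this
      exact this
    have h2 : HasDerivAt (fun t : ℝ => t * ⟪g z, v⟫) ⟪g z, v⟫ t := by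
      simpa using (hasDerivAt_id t).mul_const (⟪g z, v⟫ : ℝ)
    have h3 : HasDerivAt (fun t : ℝ => L / 2 * t ^ 2 * ‖v‖ ^ 2) (L * t * ‖v‖ ^ 2) t := by
      convert ((hasDerivAt_pow 2 t).const_mul (L / 2)).mul_const (‖v‖ ^ 2) using 1
      · rfl
      · rfl
      push_cast
      ring
    exact (h1.sub h2).sub h3
  have hd0 : ∀ t ∈ Set.Ioo (0 : ℝ) 1, deriv φ t ≤ 0 := by
    intro t ht
    rw [(hder t).deriv]
    have h4 : (⟪g (z + t • v), v⟫ : ℝ) - ⟪g z, v⟫ = ⟪g (z + t • v) - g z, v⟫ :=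
      (inner_sub_left _ _ _).symm
    have h5 : (⟪g (z + t • v) - g z, v⟫ : ℝ) ≤ ‖g (z + t • v) - g z‖ * ‖v‖ :=
      real_inner_le_norm _ _
    have h6 : ‖g (z + t • v) - g z‖ ≤ L * ‖t • v‖ := by
      simpa using hlip (z + t • v) z
    have h7 : ‖t • v‖ = t * ‖v‖ := by
      rw [norm_smul, Real.norm_eq_abs, abs_of_pos ht.1]
    have h8 := le_trans h5 (mul_le_mul_of_nonneg_right h6 (norm_nonneg v))
    rw [h7] at h8
    nlinarith [h8, norm_nonneg v, ht.1]
  have hanti : AntitoneOn φ (Set.Icc 0 1) := by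
    apply antitoneOn_of_deriv_nonpos (convex_Icc 0 1)
    · have hdiff : Differentiable ℝ φ := fun t => (hder t).differentiableAt
      exact hdiff.continuous.continuousOn
    · exact fun t _ => ((hder t).differentiableAt).differentiableWithinAt
    · intro t ht
      rw [interior_Icc] at ht
      exact hd0 t ht
  have hφ1 : φ 1 ≤ φ 0 :=
    hanti (Set.mem_Icc.2 ⟨le_refl 0, zero_le_one⟩)
      (Set.mem_Icc.2 ⟨zero_le_one, le_refl 1⟩) zero_le_one
  have hzy : z + (1 : ℝ) • v = y := by
    rw [one_smul, hv]; abel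
  simp only [hφ, hzy, zero_smul, add_zero, zero_mul, one_pow, mul_one,
    one_mul, pow_two, zero_pow, sub_zero] at hφ1
  nlinarith [hφ1]

set_option maxHeartbeats 1000000 in
theorem stmt_17 {d : ℕ} {Ω : Type*} [MeasurableSpace Ω] {P : Measure Ω}
    [IsProbabilityMeasure P]
    (f : EuclideanSpace ℝ (Fin d) → ℝ)
    (g : EuclideanSpace ℝ (Fin d) → EuclideanSpace ℝ (Fin d))
    (L μ M sig2 γ : ℝ) (hL : 0 < L) (hμ : 0 ≤ μ) (hμL : μ ≤ L)
    (hM : 0 ≤ M) (hsig : 0 ≤ sig2)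
    (xstar : EuclideanSpace ℝ (Fin d)) (hmin : ∀ y, f xstar ≤ f y)
    (hgrad : ∀ y, HasGradientAt f (g y) y)
    (hlip : ∀ y z, ‖g y - g z‖ ≤ L * ‖y - z‖)
    (hqc : ∀ y, f y - f xstar + μ / 2 * ‖y - xstar‖ ^ 2 ≤ ⟪g y, y - xstar⟫)
    (x xt : EuclideanSpace ℝ (Fin d))
    (ξ : Ω → EuclideanSpace ℝ (Fin d)) (hξmeas : Measurable ξ) (hξL2 : MemLp ξ 2 P)
    (hmean : ∫ ω, ξ ω ∂P = 0)
    (hnoise : ∫ ω, ‖ξ ω‖ ^ 2 ∂P ≤ M * ‖g x‖ ^ 2 + sig2)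
    (hγ : 0 < γ) (hγle : γ ≤ 1 / (4 * L * (1 + M))) :
    ∫ ω, ‖xt - γ • (g x + ξ ω) - xstar‖ ^ 2 ∂P
      ≤ (1 - μ * γ / 2) * ‖xt - xstar‖ ^ 2 - γ / 2 * (f x - f xstar)
        + γ ^ 2 * sig2 + 3 * L * γ * ‖x - xt‖ ^ 2 := by
  set c : EuclideanSpace ℝ (Fin d) := xt - γ • g x - xstar with hc
  have hkey : ∀ ω, xt - γ • (g x + ξ ω) - xstar = c - γ • ξ ω := by
    intro ω
    rw [hc, smul_add]
    abel
  have hexpand : ∀ ω, ‖xt - γ • (g x + ξ ω) - xstar‖ ^ 2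
      = ‖c‖ ^ 2 - 2 * γ * ⟪c, ξ ω⟫ + γ ^ 2 * ‖ξ ω‖ ^ 2 := by
    intro ω
    rw [hkey ω, norm_sub_sq_real, real_inner_smul_right, norm_smul,
      mul_pow, Real.norm_eq_abs, sq_abs]
    ring
  have hξ1 : Integrable ξ P := hξL2.integrable one_le_two
  have hInner : Integrable (fun ω => (⟪c, ξ ω⟫ : ℝ)) P := hξ1.const_inner c
  have hSq : Integrable (fun ω => ‖ξ ω‖ ^ 2) P := by
    have h := hξL2.integrable_norm_rpow (by norm_num) (by norm_num)
    simpa [ENNReal.toReal_ofNat, Real.rpow_natCast] using h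
  have hIntEq : ∫ ω, ‖xt - γ • (g x + ξ ω) - xstar‖ ^ 2 ∂P
      = ‖c‖ ^ 2 + γ ^ 2 * ∫ ω, ‖ξ ω‖ ^ 2 ∂P := by
    rw [integral_congr_ae (Filter.Eventually.of_forall hexpand)]
    have hI1 : Integrable (fun ω => ‖c‖ ^ 2 - 2 * γ * ⟪c, ξ ω⟫) P :=
      (integrable_const _).sub (hInner.const_mul (2 * γ))
    have hI2 : Integrable (fun ω => γ ^ 2 * ‖ξ ω‖ ^ 2) P := hSq.const_mul (γ ^ 2)
    rw [integral_add hI1 hI2,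
      integral_sub (integrable_const (‖c‖ ^ 2)) (hInner.const_mul (2 * γ)), integral_const,
      integral_const_mul, integral_const_mul]
    have : ∫ ω, (⟪c, ξ ω⟫ : ℝ) ∂P = 0 := by
      rw [integral_inner hξ1, hmean, inner_zero_right]
    rw [this]
    simp
  rw [hIntEq]
  -- bound noise term
  have hnoise' : γ ^ 2 * ∫ ω, ‖ξ ω‖ ^ 2 ∂P ≤ γ ^ 2 * (M * ‖g x‖ ^ 2 + sig2) :=
    mul_le_mul_of_nonneg_left hnoise (sq_nonneg γ)
  -- deterministic part
  have hcnorm : ‖c‖ ^ 2 = ‖xt - xstar‖ ^ 2 - 2 * (γ * ⟪g x, xt - xstar⟫) + γ ^ 2 * ‖g x‖ ^ 2 := by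
    have hce : c = (xt - xstar) - γ • g x := by rw [hc]; abel
    rw [hce, norm_sub_sq_real, real_inner_smul_right, norm_smul, mul_pow,
      Real.norm_eq_abs, sq_abs, real_inner_comm]
  have hq : f x - f xstar + μ / 2 * ‖x - xstar‖ ^ 2 ≤ ⟪g x, x - xstar⟫ := hqc x
  have hsplit : (⟪g x, xt - xstar⟫ : ℝ) = ⟪g x, x - xstar⟫ + ⟪g x, xt - x⟫ := by
    rw [← inner_add_right]
    congr 1
    abel
  have hcs : |(⟪g x, xt - x⟫ : ℝ)| ≤ ‖g x‖ * ‖xt - x‖ := abs_real_inner_le_norm _ _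
  have hfx : 0 ≤ f x - f xstar := sub_nonneg.2 (hmin x)
  have hG2 : ‖g x‖ ^ 2 ≤ 2 * L * (f x - f xstar) := by
    have hd := descent_aux f g L hgrad hlip x (x - (1 / L) • g x)
    have h1 : (⟪g x, x - (1 / L) • g x - x⟫ : ℝ) = -(1 / L) * ‖g x‖ ^ 2 := by
      have : x - (1 / L) • g x - x = -((1 / L) • g x) := by abel
      rw [this, inner_neg_right, real_inner_smul_right, real_inner_self_eq_norm_sq]
      ring
    have h2 : ‖x - (1 / L) • g x - x‖ ^ 2 = (1 / L) ^ 2 * ‖g x‖ ^ 2 := by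
      have : x - (1 / L) • g x - x = -((1 / L) • g x) := by abel
      rw [this, norm_neg, norm_smul, mul_pow, Real.norm_eq_abs, sq_abs]
    rw [h1, h2] at hd
    have hmin' := hmin (x - (1 / L) • g x)
    have hL' : L ≠ 0 := ne_of_gt hL
    have : f xstar ≤ f x + -(1 / L) * ‖g x‖ ^ 2 + L / 2 * ((1 / L) ^ 2 * ‖g x‖ ^ 2) :=
      le_trans hmin' hd
    have h9 : -(1 / L) * ‖g x‖ ^ 2 + L / 2 * ((1 / L) ^ 2 * ‖g x‖ ^ 2)
        = -(1 / (2 * L)) * ‖g x‖ ^ 2 := by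
      field_simp
      ring
    have h11 : 1 / (2 * L) * ‖g x‖ ^ 2 ≤ f x - f xstar := by linarith
    have h12 := mul_le_mul_of_nonneg_left h11 (by positivity : (0:ℝ) ≤ 2 * L)
    have h13 : 2 * L * (1 / (2 * L) * ‖g x‖ ^ 2) = ‖g x‖ ^ 2 := by field_simp
    linarith [h12, h13]
  have htri : ‖xt - xstar‖ ≤ ‖xt - x‖ + ‖x - xstar‖ := by
    have h : xt - xstar = (xt - x) + (x - xstar) := by abel
    rw [h]
    exact norm_add_le _ _
  have htri2 : ‖xt - xstar‖ ^ 2 ≤ 2 * ‖x - xstar‖ ^ 2 + 2 * ‖xt - x‖ ^ 2 := by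
    nlinarith [htri, norm_nonneg (xt - xstar), sq_nonneg (‖xt - x‖ - ‖x - xstar‖)]
  have hγ4 : γ * (4 * L * (1 + M)) ≤ 1 := by
    rw [← le_div_iff₀ (by positivity)]
    exact hγle
  -- (i) γ²(1+M)‖G‖² ≤ γ/2 (fx - f⋆)
  have hstep : γ ^ 2 * ((1 + M) * ‖g x‖ ^ 2) ≤ γ / 2 * (f x - f xstar) := by
    have h1 : (1 + M) * ‖g x‖ ^ 2 ≤ (1 + M) * (2 * L * (f x - f xstar)) :=
      mul_le_mul_of_nonneg_left hG2 (by linarith)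
    have h2 := mul_le_mul_of_nonneg_right hγ4 (mul_nonneg hγ.le hfx)
    nlinarith [mul_le_mul_of_nonneg_left h1 (sq_nonneg γ), h2]
  -- (ii) Young
  have hY : 2 * γ * (‖g x‖ * ‖xt - x‖) ≤ γ * (f x - f xstar) + 2 * L * γ * ‖xt - x‖ ^ 2 := by
    have hA : γ * (‖g x‖ - 2 * L * ‖xt - x‖) ^ 2 ≥ 0 := by positivity
    have hB := mul_le_mul_of_nonneg_left hG2 hγ.le
    nlinarith [hA, hB, mul_pos hL hγ]
  -- (iii) μ triangle
  have hμtri : μ * γ * ‖xt - xstar‖ ^ 2 ≤ 2 * (μ * γ) * ‖x - xstar‖ ^ 2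
      + 2 * (μ * γ) * ‖xt - x‖ ^ 2 := by
    nlinarith [mul_le_mul_of_nonneg_left htri2 (mul_nonneg hμ hγ.le)]
  have hrev : ‖x - xt‖ = ‖xt - x‖ := norm_sub_rev _ _
  have hμγL : μ * γ * ‖xt - x‖ ^ 2 ≤ L * γ * ‖xt - x‖ ^ 2 :=
    mul_le_mul_of_nonneg_right (mul_le_mul_of_nonneg_right hμL hγ.le) (sq_nonneg _)
  have hq2 := mul_le_mul_of_nonneg_left hq (by linarith : (0:ℝ) ≤ 2 * γ)
  have hcs2 : -(⟪g x, xt - x⟫ : ℝ) ≤ ‖g x‖ * ‖xt - x‖ := by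
    have := neg_abs_le (⟪g x, xt - x⟫ : ℝ)
    linarith [hcs]
  have hcs3 := mul_le_mul_of_nonneg_left hcs2 (by linarith : (0:ℝ) ≤ 2 * γ)
  rw [hrev, hcnorm, hsplit]
  linarith [hnoise', hstep, hY, hμtri, hμγL, hq2, hcs3]
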